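/- If H shatters a mistake tree of depth m, then the contradiction graph G_m(H) contains a clique of size 2^m (namely, the 2^m datasets corresponding to the root-to-leaf paths of the shattered tree form a clique). Consequently LD(H) ≤ CD(H). -/

import Mathlib

open MeasureTheory
open scoped ENNReal

namespace ContradictionGraph

variable {X : Type*}

/-- A hypothesis `h : X → Bool` is consistent with the dataset `S` of size `m` if it labels
every example in `S` correctly. -/
def Consistent (h : X → Bool) {m : ℕ} (S : Fin m → X × Bool) : Prop :=
  ∀ i, h (S i).1 = (S i).2

/-- A dataset `S` is realizable by the concept class `H` if some hypothesis in `H` is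
consistent with it. -/
def Realizable (H : Set (X → Bool)) {m : ℕ} (S : Fin m → X × Bool) : Prop :=
  ∃ h ∈ H, Consistent h S

/-- Two datasets contradict each other if there is a point `x` such that one of them contains
the labeled example `(x, 0)` and the other contains `(x, 1)`. -/
def Contradicts {m : ℕ} (S S' : Fin m → X × Bool) : Prop :=
  ∃ x : X, ((∃ i, S i = (x, false)) ∧ (∃ j, S' j = (x, true))) ∨
    ((∃ i, S i = (x, true)) ∧ (∃ j, S' j = (x, false)))

/-- The vertex set of the contradiction graph `G_m(H)`: all `H`-realizable datasets of
size `m`. -/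
abbrev Vm (H : Set (X → Bool)) (m : ℕ) : Type _ :=
  {S : Fin m → X × Bool // Realizable H S}

/-- A clique in the contradiction graph `G_m(H)`: a set of vertices every two distinct members
of which contradict each other. -/
def IsClique (H : Set (X → Bool)) (m : ℕ) (C : Set (Vm H m)) : Prop :=
  ∀ S ∈ C, ∀ S' ∈ C, S ≠ S' → Contradicts S.1 S'.1

/-- An independent set in the contradiction graph `G_m(H)`: a set of vertices no two of which
are adjacent (i.e. no two distinct members contradict each other). -/
def IsIndep (H : Set (X → Bool)) (m : ℕ) (I : Set (Vm H m)) : Prop :=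
  ∀ S ∈ I, ∀ S' ∈ I, S ≠ S' → ¬ Contradicts S.1 S'.1

/-- The clique number `ω_m` of `G_m(H)`: the supremum of the sizes of cliques (in `ℕ∞`). -/
noncomputable def cliqueNum (H : Set (X → Bool)) (m : ℕ) : ℕ∞ :=
  ⨆ (C : Set (Vm H m)) (_ : IsClique H m C), C.encard

/-- The clique dimension `CD(H) = sup { m : ω_m = 2^m } ∈ ℕ ∪ {∞}`. -/
noncomputable def cliqueDim (H : Set (X → Bool)) : ℕ∞ :=
  ⨆ (m : ℕ) (_ : cliqueNum H m = 2 ^ m), (m : ℕ∞)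

/-- A fractional clique of `G_m(H)`: a nonnegative weight function on the vertices such that
the total weight of every independent set is at most `1`. -/
def IsFracClique (H : Set (X → Bool)) (m : ℕ) (δ : Vm H m → ℝ≥0∞) : Prop :=
  ∀ I : Set (Vm H m), IsIndep H m I → ∑' S : I, δ S.1 ≤ 1

/-- The fractional clique number `ω*_m` of `G_m(H)`: the supremum of the sizes
`|δ| = Σ_S δ(S)` of fractional cliques. -/
noncomputable def fracCliqueNum (H : Set (X → Bool)) (m : ℕ) : ℝ≥0∞ :=
  ⨆ (δ : Vm H m → ℝ≥0∞) (_ : IsFracClique H m δ), ∑' S, δ S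

/-- The fractional clique dimension `CD*(H) = sup { m : ω*_m = 2^m } ∈ ℕ ∪ {∞}`. -/
noncomputable def fracCliqueDim (H : Set (X → Bool)) : ℕ∞ :=
  ⨆ (m : ℕ) (_ : fracCliqueNum H m = 2 ^ m), (m : ℕ∞)

end ContradictionGraph

namespace ContradictionGraph
variable {X : Type*}

/-- `H` shatters a mistake tree of depth `d`: there is an assignment of points of `X` to the
internal nodes of the complete binary tree of depth `d` (the point fed to branch `ε` at level
`i` depends only on the first `i` bits of `ε`) such that every root-to-leaf dataset is
realizable by `H`. -/
def ShattersTree (H : Set (X → Bool)) (d : ℕ) : Prop :=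
  ∃ t : (Fin d → Bool) → Fin d → X,
    (∀ ε ε' : Fin d → Bool, ∀ i : Fin d, (∀ j : Fin d, j < i → ε j = ε' j) → t ε i = t ε' i) ∧
    ∀ ε : Fin d → Bool, Realizable H (fun i => (t ε i, ε i))

/-- The Littlestone dimension `LD(H)`: the largest `d` such that `H` shatters a mistake tree of
depth `d` (equal to `∞` if `H` shatters arbitrarily deep trees). -/
noncomputable def littlestoneDim (H : Set (X → Bool)) : ℕ∞ :=
  ⨆ (d : ℕ) (_ : ShattersTree H d), (d : ℕ∞)

end ContradictionGraph

namespace ContradictionGraph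


open Classical in
/-- Counting lemma: any finite clique in the contradiction graph has size at most `2^m`. -/
lemma clique_finset_card_le' {X : Type*} (H : Set (X → Bool)) (m : ℕ)
    (C' : Finset {S : Fin m → X × Bool // ∃ h ∈ H, ∀ i, h (S i).1 = (S i).2})
    (hC : ∀ S ∈ C', ∀ S' ∈ C', S ≠ S' →
      ∃ x : X, ((∃ i, S.1 i = (x, false)) ∧ (∃ j, S'.1 j = (x, true))) ∨
        ((∃ i, S.1 i = (x, true)) ∧ (∃ j, S'.1 j = (x, false)))) :
    C'.card ≤ 2 ^ m := by
  classical
  -- the finite set of points appearing in some dataset of the clique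
  set pts : {S : Fin m → X × Bool // ∃ h ∈ H, ∀ i, h (S i).1 = (S i).2} → Finset X :=
    fun S => Finset.image (fun i => (S.1 i).1) Finset.univ with hpts
  set P : Finset X := C'.biUnion pts with hP
  -- assignments on P consistent with a given dataset
  set cons : {S : Fin m → X × Bool // ∃ h ∈ H, ∀ i, h (S i).1 = (S i).2} →
      Finset (↥P → Bool) :=
    fun S => Finset.univ.filter
      (fun g => ∀ i (hx : (S.1 i).1 ∈ P), g ⟨(S.1 i).1, hx⟩ = (S.1 i).2) with hcons
  -- each dataset has many consistent assignments
  have hlow : ∀ S ∈ C', 2 ^ P.card ≤ 2 ^ m * (cons S).card := by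
    intro S hS
    obtain ⟨h, -, hh⟩ := S.2
    set k := Fintype.card {x : ↥P // (x : X) ∉ pts S} with hk
    have hmaps : ∀ f : {x : ↥P // (x : X) ∉ pts S} → Bool,
        (fun x : ↥P => if hx : (x : X) ∈ pts S then h x else f ⟨x, hx⟩) ∈ cons S := by
      intro f
      simp only [hcons, Finset.mem_filter, Finset.mem_univ, true_and]
      intro i hx
      have hmem : ((S.1 i).1 : X) ∈ pts S := Finset.mem_image_of_mem _ (Finset.mem_univ i)
      simp [hmem, hh i]
    have hinj : Set.InjOn
        (fun (f : {x : ↥P // (x : X) ∉ pts S} → Bool) (x : ↥P) =>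
          if hx : (x : X) ∈ pts S then h x else f ⟨x, hx⟩)
        (Finset.univ : Finset ({x : ↥P // (x : X) ∉ pts S} → Bool)) := by
      intro f _ f' _ hff
      funext x
      have := congrFun hff x.1
      simpa [x.2] using this
    have hcard1 : 2 ^ k ≤ (cons S).card := by
      calc 2 ^ k = Fintype.card Bool ^ Fintype.card {x : ↥P // (x : X) ∉ pts S} := by
            rw [hk, Fintype.card_bool]
        _ = Fintype.card ({x : ↥P // (x : X) ∉ pts S} → Bool) := Fintype.card_fun.symm
        _ = (Finset.univ : Finset ({x : ↥P // (x : X) ∉ pts S} → Bool)).card := by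
            simp
        _ ≤ (cons S).card :=
            Finset.card_le_card_of_injOn _ (fun f _ => hmaps f) hinj
    have hPk : P.card ≤ m + k := by
      have h1 : Fintype.card {x : ↥P // (x : X) ∈ pts S} ≤ m := by
        have hi1 : Fintype.card {x : ↥P // (x : X) ∈ pts S} ≤ Fintype.card ↥(pts S) :=
          Fintype.card_le_of_injective (fun x => ⟨x.1, x.2⟩)
            (by intro a b hab
                simp only [Subtype.mk.injEq] at hab
                exact Subtype.ext (Subtype.ext hab))
        calc Fintype.card {x : ↥P // (x : X) ∈ pts S} ≤ Fintype.card ↥(pts S) := hi1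
          _ = (pts S).card := Fintype.card_coe _
          _ ≤ (Finset.univ : Finset (Fin m)).card := Finset.card_image_le
          _ = m := by simp
      have e1 : k = Fintype.card ↥P - Fintype.card {x : ↥P // (x : X) ∈ pts S} := by
        rw [hk]; exact Fintype.card_subtype_compl _
      have hle : Fintype.card {x : ↥P // (x : X) ∈ pts S} ≤ Fintype.card ↥P :=
        Fintype.card_subtype_le _
      have e2 : Fintype.card ↥P = P.card := Fintype.card_coe _
      omega
    calc 2 ^ P.card ≤ 2 ^ (m + k) := Nat.pow_le_pow_right (by norm_num) hPk
      _ = 2 ^ m * 2 ^ k := pow_add 2 m k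
      _ ≤ 2 ^ m * (cons S).card := Nat.mul_le_mul_left _ hcard1
  -- consistent sets of distinct clique members are disjoint
  have hdisj : ∀ S ∈ C', ∀ S' ∈ C', S ≠ S' → Disjoint (cons S) (cons S') := by
    intro S hS S' hS' hne
    rw [Finset.disjoint_left]
    intro g hg hg'
    simp only [hcons, Finset.mem_filter, Finset.mem_univ, true_and] at hg hg'
    have gval : ∀ (T : {S : Fin m → X × Bool // ∃ h ∈ H, ∀ i, h (S i).1 = (S i).2}),
        (∀ i (hx : (T.1 i).1 ∈ P), g ⟨(T.1 i).1, hx⟩ = (T.1 i).2) →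
        ∀ (i : Fin m) (x : X) (b : Bool), T.1 i = (x, b) → ∀ (hxP : x ∈ P),
        g ⟨x, hxP⟩ = b := by
      intro T hgT i x b hT hxP
      have hx1 : (T.1 i).1 = x := congrArg Prod.fst hT
      have hx2 : (T.1 i).2 = b := congrArg Prod.snd hT
      have h0 := hgT i (hx1.symm ▸ hxP)
      calc g ⟨x, hxP⟩ = g ⟨(T.1 i).1, hx1.symm ▸ hxP⟩ :=
            congrArg g (Subtype.ext hx1.symm)
        _ = (T.1 i).2 := h0
        _ = b := hx2
    obtain ⟨x, hcase⟩ := hC S hS S' hS' hne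
    rcases hcase with ⟨⟨i, hi⟩, ⟨j, hj⟩⟩ | ⟨⟨i, hi⟩, ⟨j, hj⟩⟩
    all_goals {
      have hxP : x ∈ P := by
        refine Finset.mem_biUnion.2 ⟨S, hS, ?_⟩
        have hxm : ((S.1 i).1 : X) ∈ pts S := Finset.mem_image_of_mem _ (Finset.mem_univ i)
        rwa [congrArg Prod.fst hi] at hxm
      have h1 := gval S hg i x _ hi hxP
      have h2 := gval S' hg' j x _ hj hxP
      simp [h1] at h2 }
  -- sum up
  have hsum : ∑ S ∈ C', (cons S).card ≤ 2 ^ P.card := by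
    rw [← Finset.card_biUnion hdisj]
    calc (C'.biUnion cons).card ≤ (Finset.univ : Finset (↥P → Bool)).card :=
          Finset.card_le_univ _
      _ = 2 ^ P.card := by simp [Fintype.card_fun]
  have hmain : C'.card * 2 ^ P.card ≤ 2 ^ m * 2 ^ P.card := by
    calc C'.card * 2 ^ P.card = ∑ _S ∈ C', 2 ^ P.card := by
          rw [Finset.sum_const, smul_eq_mul]
      _ ≤ ∑ S ∈ C', 2 ^ m * (cons S).card := Finset.sum_le_sum hlow
      _ = 2 ^ m * ∑ S ∈ C', (cons S).card := by rw [Finset.mul_sum]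
      _ ≤ 2 ^ m * 2 ^ P.card := Nat.mul_le_mul_left _ hsum
  exact Nat.le_of_mul_le_mul_right hmain (Nat.pow_pos (by norm_num))


open Classical in
/-- Counting lemma restated: any finite clique in `G_m(H)` has size at most `2^m`. -/
lemma clique_finset_card_le {X : Type*} (H : Set (X → Bool)) (m : ℕ)
    (C' : Finset (Vm H m))
    (hC : ∀ S ∈ C', ∀ S' ∈ C', S ≠ S' → Contradicts S.1 S'.1) :
    C'.card ≤ 2 ^ m :=
  clique_finset_card_le' H m C' hC

/-- The clique number of `G_m(H)` is at most `2^m`. -/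
lemma cliqueNum_le_pow {X : Type*} (H : Set (X → Bool)) (m : ℕ) :
    cliqueNum H m ≤ 2 ^ m := by
  rw [cliqueNum]
  refine iSup₂_le fun C hC => ?_
  by_contra hlt
  push_neg at hlt
  have h2 : ((2 ^ m + 1 : ℕ) : ℕ∞) ≤ C.encard := by
    calc ((2 ^ m + 1 : ℕ) : ℕ∞) = (2 : ℕ∞) ^ m + 1 := by push_cast; ring
      _ ≤ C.encard := Order.add_one_le_of_lt hlt
  obtain ⟨t, htC, htcard⟩ := Set.exists_subset_encard_eq h2
  have htfin : t.Finite := Set.finite_of_encard_eq_coe htcard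
  have hcard : htfin.toFinset.card = 2 ^ m + 1 := by
    have h3 := htfin.encard_eq_coe_toFinset_card
    rw [htcard] at h3
    exact_mod_cast h3.symm
  have hle := clique_finset_card_le H m htfin.toFinset
    (fun S hS S' hS' hne =>
      hC S (htC (htfin.mem_toFinset.1 hS)) S' (htC (htfin.mem_toFinset.1 hS')) hne)
  omega

/-- The clique of size `2^m` coming from a shattered mistake tree. -/
lemma exists_clique_of_shatters {X : Type*} (H : Set (X → Bool)) (m : ℕ)
    (hs : ShattersTree H m) :
    ∃ C : Set (Vm H m), IsClique H m C ∧ C.encard = 2 ^ m := by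
  classical
  obtain ⟨t, hpref, hreal⟩ := hs
  refine ⟨Set.range (fun ε : Fin m → Bool =>
    (⟨fun i => (t ε i, ε i), hreal ε⟩ : Vm H m)), ?_, ?_⟩
  · rintro S ⟨ε, rfl⟩ S' ⟨ε', rfl⟩ hne
    have hεε : ε ≠ ε' := by rintro rfl; exact hne rfl
    have hsne : (Finset.univ.filter (fun i => ε i ≠ ε' i)).Nonempty := by
      by_contra hno
      rw [Finset.not_nonempty_iff_eq_empty, Finset.filter_eq_empty_iff] at hno
      exact hεε (funext fun i => by
        have := hno (Finset.mem_univ i); simpa using this)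
    set i := (Finset.univ.filter (fun i => ε i ≠ ε' i)).min' hsne with hidef
    have hdiff : ε i ≠ ε' i :=
      (Finset.mem_filter.1 ((Finset.univ.filter _).min'_mem hsne)).2
    have hpre : ∀ j, j < i → ε j = ε' j := by
      intro j hj
      by_contra hcj
      exact absurd hj (not_lt.2 (Finset.min'_le _ j
        (Finset.mem_filter.2 ⟨Finset.mem_univ j, hcj⟩)))
    have hx : t ε i = t ε' i := hpref ε ε' i hpre
    refine ⟨t ε i, ?_⟩
    cases hb : ε i with
    | false =>
      have hb' : ε' i = true := by
        cases hb2 : ε' i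
        · exact absurd (hb.trans hb2.symm) hdiff
        · rfl
      exact Or.inl ⟨⟨i, by simp [hb]⟩, ⟨i, by simp [hb', hx]⟩⟩
    | true =>
      have hb' : ε' i = false := by
        cases hb2 : ε' i
        · rfl
        · exact absurd (hb.trans hb2.symm) hdiff
      exact Or.inr ⟨⟨i, by simp [hb]⟩, ⟨i, by simp [hb', hx]⟩⟩
  · have hinj : Function.Injective
        (fun ε : Fin m → Bool => (⟨fun i => (t ε i, ε i), hreal ε⟩ : Vm H m)) := by
      intro ε ε' hee
      funext i
      exact congrArg Prod.snd (congrFun (congrArg Subtype.val hee) i)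
    rw [← Set.image_univ, (hinj.injOn).encard_image, Set.encard_univ]
    rw [ENat.card_eq_coe_fintype_card]
    rw [Fintype.card_fun]
    simp

/-- If `H` shatters a mistake tree of depth `m`, then the contradiction graph
`G_m(H)` contains a clique of size `2^m` (the `2^m` datasets corresponding to the
root-to-leaf paths of the shattered tree form a clique). Consequently `LD(H) ≤ CD(H)`. -/
theorem shatters_implies_clique_and_LD_le_CD {X : Type*} [Countable X]
    (H : Set (X → Bool)) (hH : H.Nonempty) :
    (∀ m : ℕ, ShattersTree H m →
      ∃ C : Set (Vm H m), IsClique H m C ∧ C.encard = 2 ^ m) ∧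
    littlestoneDim H ≤ cliqueDim H := by
  refine ⟨fun m hs => exists_clique_of_shatters H m hs, ?_⟩
  rw [littlestoneDim, cliqueDim]
  refine iSup₂_le fun d hd => ?_
  have hnum : cliqueNum H d = 2 ^ d := by
    refine le_antisymm (cliqueNum_le_pow H d) ?_
    obtain ⟨C, hC, hcard⟩ := exists_clique_of_shatters H d hd
    calc (2 : ℕ∞) ^ d = C.encard := hcard.symm
      _ ≤ cliqueNum H d := by
        rw [cliqueNum]; exact le_iSup₂_of_le C hC le_rfl
  exact le_iSup₂_of_le d hnum le_rfl

end ContradictionGraph
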